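/- Let A be the Weyl algebra W(M*, {·,·}_ε) of the representation space M = Rep(G, V) of a simply-laced quiver G with skew-symmetric weight function ε : G₁ → ℂ*, so that the Weyl generators satisfy [B̂_α^{kl}, B̂_β^{k'l'}] = ε_α^{-1}·δ_{α*,β}·δ_{k,l'}·δ_{k',l}. Fix a node i and define, for each pair of matrix indices (k,l), μ̂*_i(Λ̂^i_{kl}) := (1/2)·Σ_{α: t(α)=i} ε_α · Σ_m (B̂_α^{km} ∗ B̂_{α*}^{ml} + B̂_{α*}^{ml} ∗ B̂_α^{km}). Then the map e^i_{lk} ↦ μ̂*_i(Λ̂^i_{kl}) is a Lie algebra morphism from gl(V_i) (with commutator bracket, via the standard basis e^i_{lk}) to A with its commutator bracket; i.e. [μ̂*_i(Λ̂^i_{kl}), μ̂*_i(Λ̂^i_{k'l'})] = μ̂*_i applied to the bracket [e_{lk}, e_{l'k'}] transported by trace duality. -/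

import Mathlib

noncomputable section

set_option linter.unusedSectionVars false
set_option maxHeartbeats 1000000

/-- The quantum comoment element μ̂*_i(Λ̂^i_{kl}) in the Weyl algebra of the
representation space of the star of the node i of a simply-laced quiver:
(1/2)·Σ_{α : t(α)=i} ε_α·Σ_m (B̂_α^{km} ∗ B̂_{α*}^{ml} + B̂_{α*}^{ml} ∗ B̂_α^{km}). -/
def quivMu {A : Type*} [Ring A] [Algebra ℂ A] {Ar : Type*} [Fintype Ar]
    {n : ℕ} {m : Ar → ℕ} (ε : Ar → ℂ)
    (Bin : (α : Ar) → Fin n → Fin (m α) → A)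
    (Bout : (α : Ar) → Fin (m α) → Fin n → A) (k l : Fin n) : A :=
  (1 / 2 : ℂ) • ∑ α, ε α • ∑ mm, (Bin α k mm * Bout α mm l + Bout α mm l * Bin α k mm)

/-- The linear extension of e^i_{lk} ↦ μ̂*_i(Λ̂^i_{kl}) (trace duality) to gl(V_i). -/
def quivPhi {A : Type*} [Ring A] [Algebra ℂ A] {Ar : Type*} [Fintype Ar]
    {n : ℕ} {m : Ar → ℕ} (ε : Ar → ℂ)
    (Bin : (α : Ar) → Fin n → Fin (m α) → A)
    (Bout : (α : Ar) → Fin (m α) → Fin n → A)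
    (X : Matrix (Fin n) (Fin n) ℂ) : A :=
  ∑ k, ∑ l, X l k • quivMu ε Bin Bout k l

/- ### Auxiliary material -/

theorem quiv_swap4 {A : Type*} [Ring A] (X Y Z W : A)
    (h1 : Y*Z = Z*Y) (h2 : X*Z = Z*X) (h3 : Y*W = W*Y) (h4 : X*W = W*X) :
    X*Y*(Z*W) = Z*W*(X*Y) := by
  simp only [mul_assoc]
  rw [← mul_assoc Y Z W, h1, mul_assoc Z Y W, h3,
      ← mul_assoc X Z (W*Y), h2, mul_assoc Z X (W*Y),
      ← mul_assoc X W Y, h4, mul_assoc W X Y]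

theorem quiv_quadcomm {A : Type*} [Ring A] (X Y Z W e1 e2 : A)
    (h1 : Z*Y - Y*Z = e1) (h2 : X*W - W*X = e2)
    (hXZ : X*Z = Z*X) (hYW : Y*W = W*Y)
    (c1 : ∀ a : A, e1 * a = a * e1) (c2 : ∀ a : A, e2 * a = a * e2) :
    X*Y*(Z*W) - Z*W*(X*Y) = e2*(Z*Y) - e1*(X*W) := by
  have hYZ : Y*Z = Z*Y - e1 := by rw [← h1]; abel
  have hXW : X*W = W*X + e2 := by rw [← h2]; abel
  have key : X*Y*(Z*W) = Z*W*(X*Y) + e2*(Z*Y) - e1*(X*W) := by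
    calc X*Y*(Z*W) = X*(Y*Z)*W := by noncomm_ring
    _ = X*(Z*Y - e1)*W := by rw [hYZ]
    _ = X*(Z*Y)*W - e1*(X*W) := by rw [mul_sub, sub_mul, ← c1 X, mul_assoc e1 X W]
    _ = (X*Z)*(Y*W) - e1*(X*W) := by noncomm_ring
    _ = (Z*X)*(W*Y) - e1*(X*W) := by rw [hXZ, hYW]
    _ = Z*(X*W)*Y - e1*(X*W) := by noncomm_ring
    _ = Z*(W*X + e2)*Y - e1*(X*W) := by rw [hXW]
    _ = Z*W*(X*Y) + e2*(Z*Y) - e1*(X*W) := by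
        rw [mul_add, add_mul, mul_assoc Z e2 Y, ← mul_assoc Z e2 Y, ← c2 Z, mul_assoc e2 Z Y]
        noncomm_ring
  rw [key]; abel

theorem quiv_sum3_comm {ι₁ ι₂ ι₃ M : Type*} [Fintype ι₁] [Fintype ι₂] [Fintype ι₃]
    [AddCommMonoid M] (f : ι₁ → ι₂ → ι₃ → M) :
    ∑ a, ∑ b, ∑ c, f a b c = ∑ c, ∑ b, ∑ a, f a b c := by
  calc ∑ a, ∑ b, ∑ c, f a b c = ∑ b, ∑ a, ∑ c, f a b c := Finset.sum_comm
    _ = ∑ b, ∑ c, ∑ a, f a b c := Finset.sum_congr rfl fun b _ => Finset.sum_comm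
    _ = ∑ c, ∑ b, ∑ a, f a b c := Finset.sum_comm

theorem quiv_smulsum_mul {A : Type*} [Ring A] [Algebra ℂ A] {ι κ : Type*}
    [Fintype ι] [Fintype κ] (a : ι → ℂ) (b : κ → ℂ) (f : ι → A) (g : κ → A) :
    (∑ i, a i • f i) * (∑ j, b j • g j) = ∑ i, ∑ j, (a i * b j) • (f i * g j) := by
  rw [Finset.sum_mul_sum]
  simp only [smul_mul_assoc, mul_smul_comm, smul_smul]
  refine Finset.sum_congr rfl fun i _ => Finset.sum_congr rfl fun j _ => ?_
  rw [mul_comm (b j) (a i)]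

theorem quiv_central_cancel {A : Type*} [Ring A] [Algebra ℂ A] (a b : ℂ) (P Q : A) :
    (P - a•1)*(Q - b•1) - (Q - b•1)*(P - a•1) = P*Q - Q*P := by
  simp only [mul_sub, sub_mul, smul_mul_assoc, mul_smul_comm, mul_one, one_mul,
    smul_sub, smul_smul]
  rw [mul_comm b a]
  abel

theorem quiv_coll1 {A : Type*} [Ring A] [Algebra ℂ A] {n : ℕ}
    (N : Fin n → Fin n → A) (X Y : Matrix (Fin n) (Fin n) ℂ) :
    ∑ p : Fin n × Fin n, ∑ q : Fin n × Fin n,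
      (X p.2 p.1 * Y q.2 q.1) • ((if q.2 = p.1 then (1:ℂ) else 0) • N q.1 p.2)
    = ∑ p : Fin n × Fin n, (X * Y) p.2 p.1 • N p.1 p.2 := by
  simp only [ite_smul, one_smul, zero_smul, smul_ite, smul_zero, Fintype.sum_prod_type,
    Finset.sum_ite_eq', Finset.mem_univ, if_true, Matrix.mul_apply, Finset.sum_smul]
  rw [quiv_sum3_comm]

theorem quiv_coll2 {A : Type*} [Ring A] [Algebra ℂ A] {n : ℕ}
    (N : Fin n → Fin n → A) (X Y : Matrix (Fin n) (Fin n) ℂ) :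
    ∑ p : Fin n × Fin n, ∑ q : Fin n × Fin n,
      (X p.2 p.1 * Y q.2 q.1) • ((if p.2 = q.1 then (1:ℂ) else 0) • N p.1 q.2)
    = ∑ p : Fin n × Fin n, (Y * X) p.2 p.1 • N p.1 p.2 := by
  simp only [ite_smul, one_smul, zero_smul, smul_ite, smul_zero]
  have step : ∀ p : Fin n × Fin n, ∑ q : Fin n × Fin n,
      (if p.2 = q.1 then (X p.2 p.1 * Y q.2 q.1) • N p.1 q.2 else 0)
      = ∑ q2, (X p.2 p.1 * Y q2 p.2) • N p.1 q2 := by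
    intro p
    rw [Fintype.sum_prod_type, Finset.sum_comm]
    simp [Finset.sum_ite_eq]
  simp only [step]
  simp only [Fintype.sum_prod_type, Matrix.mul_apply, Finset.sum_smul]
  refine Finset.sum_congr rfl fun a _ => ?_
  rw [Finset.sum_comm]
  refine Finset.sum_congr rfl fun b _ => Finset.sum_congr rfl fun c _ => ?_
  rw [mul_comm (Y b c) (X c a)]

theorem quiv_trace_comm_zero {n : ℕ} (X Y : Matrix (Fin n) (Fin n) ℂ) :
    ∑ k, ((X*Y - Y*X) : Matrix (Fin n) (Fin n) ℂ) k k = 0 := by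
  simp only [Matrix.sub_apply, Matrix.mul_apply]
  rw [Finset.sum_sub_distrib, Finset.sum_comm (s := Finset.univ) (t := Finset.univ)]
  simp only [mul_comm]
  rw [sub_self]

section Aux

variable {A : Type*} [Ring A] [Algebra ℂ A] {Ar : Type*} [Fintype Ar]
    {n : ℕ} {m : Ar → ℕ} (ε : Ar → ℂ)
    (Bin : (α : Ar) → Fin n → Fin (m α) → A)
    (Bout : (α : Ar) → Fin (m α) → Fin n → A)

/-- The normally-ordered quadratic element Σ_α ε_α Σ_m B̂_α^{km} ∗ B̂_{α*}^{ml}. -/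
def quivNN (k l : Fin n) : A := ∑ α, ε α • ∑ mm, Bin α k mm * Bout α mm l

variable {ε Bin Bout}

theorem quiv_term_comm
    (hio : ∀ α (k : Fin n) (l : Fin (m α)) (k' : Fin (m α)) (l' : Fin n),
      Bin α k l * Bout α k' l' - Bout α k' l' * Bin α k l
        = if l' = k ∧ k' = l then algebraMap ℂ A (ε α)⁻¹ else 0)
    (hii : ∀ α β (k : Fin n) (l : Fin (m α)) (k' : Fin n) (l' : Fin (m β)),
      Bin α k l * Bin β k' l' = Bin β k' l' * Bin α k l)
    (hoo : ∀ α β (k : Fin (m α)) (l : Fin n) (k' : Fin (m β)) (l' : Fin n),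
      Bout α k l * Bout β k' l' = Bout β k' l' * Bout α k l)
    (k l k' l' : Fin n) (α : Ar) (i j : Fin (m α)) :
    Bin α k i * Bout α i l * (Bin α k' j * Bout α j l')
      - Bin α k' j * Bout α j l' * (Bin α k i * Bout α i l)
    = (if l' = k ∧ j = i then ((ε α)⁻¹ : ℂ) else 0) • (Bin α k' j * Bout α i l)
      - (if l = k' ∧ i = j then ((ε α)⁻¹ : ℂ) else 0) • (Bin α k i * Bout α j l') := by
  have central : ∀ (c : Prop) [Decidable c] (d : ℂ) (a : A),
      (if c then algebraMap ℂ A d else 0) * a = a * (if c then algebraMap ℂ A d else 0) := by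
    intro c _ d a
    split_ifs with h
    · exact Algebra.commutes d a
    · simp
  have := quiv_quadcomm (Bin α k i) (Bout α i l) (Bin α k' j) (Bout α j l')
      (if l = k' ∧ i = j then algebraMap ℂ A (ε α)⁻¹ else 0)
      (if l' = k ∧ j = i then algebraMap ℂ A (ε α)⁻¹ else 0)
      (hio α k' j i l) (hio α k i j l')
      (hii α α k i k' j) (hoo α α i l j l')
      (central _ _) (central _ _)
  rw [this]
  simp only [ite_mul, zero_mul, ← Algebra.smul_def, ite_smul, zero_smul]

theorem quiv_expand_mul (a b : Ar → ℂ) (P Q : (α : Ar) → Fin (m α) → A) :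
    (∑ α, a α • ∑ i, P α i) * (∑ β, b β • ∑ j, Q β j)
      = ∑ α, ∑ β, (a α * b β) • ∑ i, ∑ j, P α i * Q β j := by
  rw [Finset.sum_mul_sum]
  simp only [smul_mul_assoc, mul_smul_comm, smul_smul, Finset.sum_mul, Finset.mul_sum,
    Finset.smul_sum]
  refine Finset.sum_congr rfl fun α _ => Finset.sum_congr rfl fun β _ => ?_
  rw [Finset.sum_comm]
  simp only [mul_comm (b β) (a α)]

theorem quivNN_comm (hε : ∀ α, ε α ≠ 0)
    (hio : ∀ α (k : Fin n) (l : Fin (m α)) (k' : Fin (m α)) (l' : Fin n),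
      Bin α k l * Bout α k' l' - Bout α k' l' * Bin α k l
        = if l' = k ∧ k' = l then algebraMap ℂ A (ε α)⁻¹ else 0)
    (hio' : ∀ α β, α ≠ β → ∀ (k : Fin n) (l : Fin (m α)) (k' : Fin (m β)) (l' : Fin n),
      Bin α k l * Bout β k' l' = Bout β k' l' * Bin α k l)
    (hii : ∀ α β (k : Fin n) (l : Fin (m α)) (k' : Fin n) (l' : Fin (m β)),
      Bin α k l * Bin β k' l' = Bin β k' l' * Bin α k l)
    (hoo : ∀ α β (k : Fin (m α)) (l : Fin n) (k' : Fin (m β)) (l' : Fin n),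
      Bout α k l * Bout β k' l' = Bout β k' l' * Bout α k l)
    (k l k' l' : Fin n) :
    quivNN ε Bin Bout k l * quivNN ε Bin Bout k' l'
      - quivNN ε Bin Bout k' l' * quivNN ε Bin Bout k l
    = (if l' = k then (1:ℂ) else 0) • quivNN ε Bin Bout k' l
      - (if l = k' then (1:ℂ) else 0) • quivNN ε Bin Bout k l' := by
  set P : (α : Ar) → Fin (m α) → A := fun α i => Bin α k i * Bout α i l with hP
  set Q : (α : Ar) → Fin (m α) → A := fun α j => Bin α k' j * Bout α j l' with hQ
  have e1 : quivNN ε Bin Bout k l * quivNN ε Bin Bout k' l'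
      = ∑ α, ∑ β, (ε α * ε β) • ∑ i, ∑ j, P α i * Q β j := quiv_expand_mul ε ε P Q
  have e2 : quivNN ε Bin Bout k' l' * quivNN ε Bin Bout k l
      = ∑ α, ∑ β, (ε α * ε β) • ∑ i, ∑ j, Q β j * P α i := by
    rw [show quivNN ε Bin Bout k' l' * quivNN ε Bin Bout k l
        = ∑ β, ∑ α, (ε β * ε α) • ∑ j, ∑ i, Q β j * P α i from quiv_expand_mul ε ε Q P,
      Finset.sum_comm]
    refine Finset.sum_congr rfl fun α _ => Finset.sum_congr rfl fun β _ => ?_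
    rw [Finset.sum_comm, mul_comm (ε β) (ε α)]
  rw [e1, e2, ← Finset.sum_sub_distrib]
  have diagval : ∀ α : Ar,
      (ε α * ε α) • ∑ i, ∑ j, (P α i * Q α j - Q α j * P α i)
      = (if l' = k then (1:ℂ) else 0) • (ε α • ∑ i, Bin α k' i * Bout α i l)
        - (if l = k' then (1:ℂ) else 0) • (ε α • ∑ i, Bin α k i * Bout α i l') := by
    intro α
    have hc : ε α * ε α * (ε α)⁻¹ = ε α := by field_simp
    have : ∀ i j, P α i * Q α j - Q α j * P α i
        = (if l' = k ∧ j = i then ((ε α)⁻¹ : ℂ) else 0) • (Bin α k' j * Bout α i l)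
          - (if l = k' ∧ i = j then ((ε α)⁻¹ : ℂ) else 0) • (Bin α k i * Bout α j l') :=
      fun i j => quiv_term_comm hio hii hoo k l k' l' α i j
    simp only [this]
    by_cases h1 : l' = k <;> by_cases h2 : l = k' <;>
      simp [h1, h2, ite_smul, zero_smul, Finset.sum_sub_distrib, Finset.sum_ite_eq,
        Finset.sum_ite_eq', smul_sub, Finset.smul_sum, smul_smul, hc]
  calc ∑ α, ((∑ β, (ε α * ε β) • ∑ i, ∑ j, P α i * Q β j)
        - ∑ β, (ε α * ε β) • ∑ i, ∑ j, Q β j * P α i)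
      = ∑ α, ∑ β, ((ε α * ε β) • ∑ i, ∑ j, P α i * Q β j
          - (ε α * ε β) • ∑ i, ∑ j, Q β j * P α i) := by
        exact Finset.sum_congr rfl fun α _ => (Finset.sum_sub_distrib _ _).symm
    _ = ∑ α, ((ε α * ε α) • ∑ i, ∑ j, P α i * Q α j
          - (ε α * ε α) • ∑ i, ∑ j, Q α j * P α i) := by
        refine Finset.sum_congr rfl fun α _ => ?_
        refine Finset.sum_eq_single α (fun β _ hβ => ?_) (by simp)
        have hcomm : ∀ (i : Fin (m α)) (j : Fin (m β)), P α i * Q β j = Q β j * P α i := by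
          intro i j
          exact quiv_swap4 _ _ _ _ ((hio' β α hβ k' j i l).symm) (hii α β k i k' j)
            (hoo α β i l j l') (hio' α β (Ne.symm hβ) k i j l')
        simp only [hcomm, sub_self]
    _ = ∑ α, (ε α * ε α) • ∑ i, ∑ j, (P α i * Q α j - Q α j * P α i) := by
        refine Finset.sum_congr rfl fun α _ => ?_
        rw [← smul_sub, ← Finset.sum_sub_distrib]
        congr 1
        exact Finset.sum_congr rfl fun i _ => (Finset.sum_sub_distrib _ _).symm
    _ = ∑ α, ((if l' = k then (1:ℂ) else 0) • (ε α • ∑ i, Bin α k' i * Bout α i l)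
        - (if l = k' then (1:ℂ) else 0) • (ε α • ∑ i, Bin α k i * Bout α i l')) := by
        exact Finset.sum_congr rfl fun α _ => diagval α
    _ = _ := by
        rw [Finset.sum_sub_distrib, ← Finset.smul_sum, ← Finset.smul_sum]
        rfl

theorem quivMu_eq_NN (hε : ∀ α, ε α ≠ 0)
    (hio : ∀ α (k : Fin n) (l : Fin (m α)) (k' : Fin (m α)) (l' : Fin n),
      Bin α k l * Bout α k' l' - Bout α k' l' * Bin α k l
        = if l' = k ∧ k' = l then algebraMap ℂ A (ε α)⁻¹ else 0)
    (k l : Fin n) :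
    quivMu ε Bin Bout k l
      = quivNN ε Bin Bout k l
        - (if l = k then ((1/2 : ℂ) * ∑ α, (m α : ℂ)) else 0) • (1 : A) := by
  have hterm : ∀ α (mm : Fin (m α)),
      Bin α k mm * Bout α mm l + Bout α mm l * Bin α k mm
        = (2:ℂ) • (Bin α k mm * Bout α mm l)
          - (if l = k then ((ε α)⁻¹ : ℂ) else 0) • (1 : A) := by
    intro α mm
    have h := hio α k mm mm l
    have h2 : Bout α mm l * Bin α k mm
        = Bin α k mm * Bout α mm l - (if l = k then ((ε α)⁻¹ : ℂ) else 0) • (1 : A) := by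
      rw [← sub_sub_cancel (Bin α k mm * Bout α mm l) (Bout α mm l * Bin α k mm), h]
      simp [Algebra.algebraMap_eq_smul_one, ite_smul]
    rw [h2, two_smul]
    abel
  unfold quivMu quivNN
  by_cases hlk : l = k
  · subst hlk
    simp only [hterm, eq_self_iff_true, if_true]
    rw [Finset.smul_sum,
      show ((1/2 : ℂ) * ∑ α, (m α : ℂ)) • (1:A) = ∑ α, ((1/2:ℂ) * (m α : ℂ)) • (1:A) by
        rw [Finset.mul_sum, Finset.sum_smul],
      ← Finset.sum_sub_distrib]
    refine Finset.sum_congr rfl fun α _ => ?_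
    rw [Finset.sum_sub_distrib, Finset.sum_const, Finset.card_univ, Fintype.card_fin,
      ← Nat.cast_smul_eq_nsmul ℂ, ← Finset.smul_sum, smul_sub, smul_sub,
      smul_smul, smul_smul, smul_smul, smul_smul, smul_smul]
    congr 1
    · congr 1; ring
    · congr 1; field_simp [hε α]
  · simp only [hterm, if_neg hlk, zero_smul, sub_zero, Finset.smul_sum, smul_smul]
    refine Finset.sum_congr rfl fun α _ => Finset.sum_congr rfl fun mm _ => ?_
    congr 1; ring

end Aux

/-- In the Weyl algebra of the representation space of a simply-laced quiver
(with generators B̂ satisfying [B̂_α^{kl}, B̂_β^{k'l'}] = ε_α⁻¹ δ_{α*β} δ_{kl'} δ_{k'l}),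
the map e^i_{lk} ↦ μ̂*_i(Λ̂^i_{kl}) is a Lie algebra morphism from gl(V_i) with the
commutator bracket to A with its commutator bracket.  Here, for a node i, Bin α is the
matrix of generators of the arrow α with target i and Bout α that of the opposite
arrow α*. -/
theorem stmt9 {A : Type*} [Ring A] [Algebra ℂ A]
    {Ar : Type*} [Fintype Ar] {n : ℕ} {m : Ar → ℕ}
    (ε : Ar → ℂ) (hε : ∀ α, ε α ≠ 0)
    (Bin : (α : Ar) → Fin n → Fin (m α) → A)
    (Bout : (α : Ar) → Fin (m α) → Fin n → A)
    (hio : ∀ α (k : Fin n) (l : Fin (m α)) (k' : Fin (m α)) (l' : Fin n),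
      Bin α k l * Bout α k' l' - Bout α k' l' * Bin α k l
        = if l' = k ∧ k' = l then algebraMap ℂ A (ε α)⁻¹ else 0)
    (hio' : ∀ α β, α ≠ β → ∀ (k : Fin n) (l : Fin (m α)) (k' : Fin (m β)) (l' : Fin n),
      Bin α k l * Bout β k' l' = Bout β k' l' * Bin α k l)
    (hii : ∀ α β (k : Fin n) (l : Fin (m α)) (k' : Fin n) (l' : Fin (m β)),
      Bin α k l * Bin β k' l' = Bin β k' l' * Bin α k l)
    (hoo : ∀ α β (k : Fin (m α)) (l : Fin n) (k' : Fin (m β)) (l' : Fin n),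
      Bout α k l * Bout β k' l' = Bout β k' l' * Bout α k l) :
    ∀ X Y : Matrix (Fin n) (Fin n) ℂ,
      quivPhi ε Bin Bout (X * Y - Y * X)
        = quivPhi ε Bin Bout X * quivPhi ε Bin Bout Y
          - quivPhi ε Bin Bout Y * quivPhi ε Bin Bout X := by
  intro X Y
  set N : Fin n → Fin n → A := quivNN ε Bin Bout with hNdef
  set c0 : ℂ := (1/2 : ℂ) * ∑ α, (m α : ℂ) with hc0
  -- the comoment map in terms of the normally ordered elements
  have hPhi : ∀ Z : Matrix (Fin n) (Fin n) ℂ,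
      quivPhi ε Bin Bout Z
        = (∑ p : Fin n × Fin n, Z p.2 p.1 • N p.1 p.2) - (c0 * ∑ k, Z k k) • (1:A) := by
    intro Z
    unfold quivPhi
    simp only [quivMu_eq_NN hε hio, ← hc0, ← hNdef, smul_sub]
    simp only [Finset.sum_sub_distrib]
    congr 1
    · rw [Fintype.sum_prod_type]
    · simp only [ite_smul, zero_smul, smul_ite, smul_zero, Finset.sum_ite_eq',
        Finset.mem_univ, if_true, Finset.sum_sub_distrib]
      rw [Finset.mul_sum, Finset.sum_smul]
      refine Finset.sum_congr rfl fun k _ => ?_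
      rw [smul_smul, mul_comm]
  have hNcomm : ∀ p q : Fin n × Fin n,
      N p.1 p.2 * N q.1 q.2 - N q.1 q.2 * N p.1 p.2
        = (if q.2 = p.1 then (1:ℂ) else 0) • N q.1 p.2
          - (if p.2 = q.1 then (1:ℂ) else 0) • N p.1 q.2 :=
    fun p q => quivNN_comm hε hio hio' hii hoo p.1 p.2 q.1 q.2
  -- the commutator of the normally ordered comoments
  have key : (∑ p : Fin n × Fin n, X p.2 p.1 • N p.1 p.2)
        * (∑ q : Fin n × Fin n, Y q.2 q.1 • N q.1 q.2)
      - (∑ q : Fin n × Fin n, Y q.2 q.1 • N q.1 q.2)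
        * (∑ p : Fin n × Fin n, X p.2 p.1 • N p.1 p.2)
      = (∑ p : Fin n × Fin n, (X*Y) p.2 p.1 • N p.1 p.2)
        - ∑ p : Fin n × Fin n, (Y*X) p.2 p.1 • N p.1 p.2 := by
    calc (∑ p : Fin n × Fin n, X p.2 p.1 • N p.1 p.2)
          * (∑ q : Fin n × Fin n, Y q.2 q.1 • N q.1 q.2)
        - (∑ q : Fin n × Fin n, Y q.2 q.1 • N q.1 q.2)
          * (∑ p : Fin n × Fin n, X p.2 p.1 • N p.1 p.2)
        = (∑ p : Fin n × Fin n, ∑ q : Fin n × Fin n,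
            (X p.2 p.1 * Y q.2 q.1) • (N p.1 p.2 * N q.1 q.2))
          - ∑ p : Fin n × Fin n, ∑ q : Fin n × Fin n,
            (X p.2 p.1 * Y q.2 q.1) • (N q.1 q.2 * N p.1 p.2) := by
          rw [quiv_smulsum_mul, quiv_smulsum_mul]
          congr 1
          rw [Finset.sum_comm]
          exact Finset.sum_congr rfl fun p _ => Finset.sum_congr rfl fun q _ => by
            rw [mul_comm (Y q.2 q.1) (X p.2 p.1)]
      _ = ∑ p : Fin n × Fin n, ∑ q : Fin n × Fin n,
            (X p.2 p.1 * Y q.2 q.1)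
              • (N p.1 p.2 * N q.1 q.2 - N q.1 q.2 * N p.1 p.2) := by
          simp only [smul_sub, Finset.sum_sub_distrib]
      _ = ∑ p : Fin n × Fin n, ∑ q : Fin n × Fin n,
            (X p.2 p.1 * Y q.2 q.1)
              • ((if q.2 = p.1 then (1:ℂ) else 0) • N q.1 p.2
                - (if p.2 = q.1 then (1:ℂ) else 0) • N p.1 q.2) := by
          simp only [hNcomm]
      _ = (∑ p : Fin n × Fin n, ∑ q : Fin n × Fin n,
            (X p.2 p.1 * Y q.2 q.1) • ((if q.2 = p.1 then (1:ℂ) else 0) • N q.1 p.2))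
          - ∑ p : Fin n × Fin n, ∑ q : Fin n × Fin n,
            (X p.2 p.1 * Y q.2 q.1) • ((if p.2 = q.1 then (1:ℂ) else 0) • N p.1 q.2) := by
          simp only [smul_sub, Finset.sum_sub_distrib]
      _ = _ := by rw [quiv_coll1, quiv_coll2]
  -- assemble
  rw [hPhi (X*Y - Y*X), hPhi X, hPhi Y, quiv_trace_comm_zero, mul_zero, zero_smul, sub_zero,
    quiv_central_cancel, key]
  simp only [Matrix.sub_apply, sub_smul, Finset.sum_sub_distrib]
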